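/- Let U be the mixture generator with coefficient matrix A, generators U^{(1)},…,U^{(r)} and mass vector m ∈ (0,1)^r (Σ_k m_k = 1). Then, with the convention e^{−∞} = 0: E[e^{U_j}] = 1 for every j ∈ D, and for every y ∈ [0,∞)^d, E[max_{j∈D} y_j e^{U_j}] = Σ_{k∈R} ℓ^{(k)}((a_{jk} y_j)_{j∈J_k}). In particular, U is a U-generator of the multivariate generalized Pareto distribution whose stable tail dependence function is ℓ(y) = Σ_k ℓ^{(k)}((a_{jk} y_j)_{j∈J_k}). -/
import Mathlib


open MeasureTheory ProbabilityTheory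

/-- A mixture coefficient matrix: entries in `[0,1]`, unit row sums, positive column sums. -/
structure MixCoeff (d r : ℕ) (A : Fin d → Fin r → ℝ) : Prop where
  mem_Icc : ∀ j k, A j k ∈ Set.Icc (0 : ℝ) 1
  row_sum : ∀ j, ∑ k, A j k = 1
  col_sum : ∀ k, 0 < ∑ j, A j k

/-- The `k`-th signature `J_k = {j : a_{jk} > 0}`. -/
noncomputable def sig {d r : ℕ} (A : Fin d → Fin r → ℝ) (k : Fin r) : Finset (Fin d) :=
  Finset.univ.filter (fun j => 0 < A j k)

/-- `e^x` for `x ∈ [-∞,∞)`, with `e^{-∞} = 0`. -/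
noncomputable def eexp (x : EReal) : ℝ := if x = ⊥ then 0 else Real.exp x.toReal

/-- The embedding `ι_{J_k} : ℝ^{J_k} → [-∞,∞)^d` setting coordinates outside `J_k`
to `-∞`. -/
noncomputable def embA {d r : ℕ} (A : Fin d → Fin r → ℝ) (k : Fin r)
    (x : {j // j ∈ sig A k} → ℝ) : Fin d → EReal :=
  fun j => if h : j ∈ sig A k then ((x ⟨j, h⟩ : ℝ) : EReal) else ⊥

lemma measurable_eexp : Measurable eexp := by
  unfold eexp
  exact Measurable.ite measurableSet_eq measurable_const
    (Real.measurable_exp.comp measurable_ereal_toReal)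

lemma eexp_nonneg (x : EReal) : 0 ≤ eexp x := by
  unfold eexp; split
  · exact le_rfl
  · exact (Real.exp_pos _).le

/-- Auxiliary: a sup over `Fin d` of a `dite` with nonnegative values over a nonempty
signature equals the sup over the subtype. -/
lemma ciSup_dite_eq {d : ℕ} [NeZero d] {s : Finset (Fin d)} (hs : s.Nonempty)
    (G : {j // j ∈ s} → ℝ) (hG : ∀ j, 0 ≤ G j) :
    (⨆ j : Fin d, if h : j ∈ s then G ⟨j, h⟩ else 0) = ⨆ j : {j // j ∈ s}, G j := by
  have hnd : Nonempty (Fin d) := ⟨⟨0, Nat.pos_of_ne_zero (NeZero.ne d)⟩⟩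
  have hne : Nonempty {j // j ∈ s} := ⟨⟨hs.choose, hs.choose_spec⟩⟩
  have hbdd : BddAbove (Set.range G) := Set.Finite.bddAbove (Set.finite_range G)
  have hbdd' : BddAbove (Set.range fun j : Fin d =>
      if h : j ∈ s then G ⟨j, h⟩ else 0) := Set.Finite.bddAbove (Set.finite_range _)
  apply le_antisymm
  · apply ciSup_le; intro j
    by_cases h : j ∈ s
    · rw [dif_pos h]; exact le_ciSup hbdd ⟨j, h⟩
    · rw [dif_neg h]
      exact le_trans (hG hne.some) (le_ciSup hbdd hne.some)
  · apply ciSup_le; intro j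
    have hj : G j = if h : j.1 ∈ s then G ⟨j.1, h⟩ else 0 := by rw [dif_pos j.2]
    rw [hj]
    exact le_ciSup hbdd' j.1

/-- Proposition 4.7: the mixture generator `U` satisfies `E[e^{U_j}] = 1` for
all `j` and `E[max_j y_j e^{U_j}] = Σ_k ℓ^{(k)}((a_{jk} y_j)_{j ∈ J_k})`, i.e. it is a
`U`-generator of the mgp distribution with stdf `ℓ`. -/
theorem mixture_generator_is_U_generator {d r : ℕ} [NeZero d] [NeZero r]
    (A : Fin d → Fin r → ℝ) (hA : MixCoeff d r A)
    {Ω : Type*} [MeasurableSpace Ω] (P : Measure Ω) [IsProbabilityMeasure P]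
    (Uk : (k : Fin r) → Ω → ({j // j ∈ sig A k} → ℝ))
    (hUkmeas : ∀ k, Measurable (Uk k))
    (hUknorm : ∀ k (j : {j // j ∈ sig A k}), ∫ ω, Real.exp (Uk k ω j) ∂P = 1)
    (m : Fin r → ℝ) (hm : ∀ k, m k ∈ Set.Ioo (0 : ℝ) 1) (hmsum : ∑ k, m k = 1)
    {Ω' : Type*} [MeasurableSpace Ω'] (P' : Measure Ω') [IsProbabilityMeasure P']
    (U : Ω' → Fin d → EReal) (hUmeas : Measurable U)
    (hUlaw : Measure.map U P' =
      ∑ k, (ENNReal.ofReal (m k)) •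
        Measure.map (fun ω => embA A k (fun j => Uk k ω j + Real.log (A j.1 k / m k))) P) :
    (∀ j : Fin d, ∫ ω', eexp (U ω' j) ∂P' = 1) ∧
    ∀ y : Fin d → ℝ, (∀ j, 0 ≤ y j) →
      ∫ ω', (⨆ j, y j * eexp (U ω' j)) ∂P' =
        ∑ k, ∫ ω, (⨆ j : {j // j ∈ sig A k}, (A j.1 k * y j.1) * Real.exp (Uk k ω j)) ∂P := by
  have hmpos : ∀ k, 0 < m k := fun k => (hm k).1
  haveI hnd : Nonempty (Fin d) := ⟨⟨0, Nat.pos_of_ne_zero (NeZero.ne d)⟩⟩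
  set h : Fin r → Ω → Fin d → EReal :=
    fun k ω => embA A k (fun j => Uk k ω j + Real.log (A j.1 k / m k)) with hh
  -- nonemptiness of signatures
  have signe : ∀ k, (sig A k).Nonempty := by
    intro k
    have : ∃ j, 0 < A j k := by
      by_contra hc
      push_neg at hc
      have h0 : ∑ j, A j k ≤ 0 := Finset.sum_nonpos fun j _ => hc j
      linarith [hA.col_sum k]
    obtain ⟨j, hj⟩ := this
    exact ⟨j, by simp [sig, hj]⟩
  -- measurability of the component maps
  have hhmeas : ∀ k, Measurable (h k) := by
    intro k
    apply measurable_pi_lambda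
    intro j
    by_cases hj : j ∈ sig A k
    · simp only [hh, embA, dif_pos hj]
      exact continuous_coe_real_ereal.measurable.comp
        (((measurable_pi_apply _).comp (hUkmeas k)).add_const _)
    · simp only [hh, embA, dif_neg hj]
      exact measurable_const
  -- pointwise evaluation of eexp ∘ h
  have heval : ∀ k ω (j : Fin d), eexp (h k ω j) =
      if hj : j ∈ sig A k then (A j k / m k) * Real.exp (Uk k ω ⟨j, hj⟩) else 0 := by
    intro k ω j
    by_cases hj : j ∈ sig A k
    · have hApos : 0 < A j k := (Finset.mem_filter.mp hj).2
      have hcpos : 0 < A j k / m k := div_pos hApos (hmpos k)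
      simp only [hh, embA, eexp, dif_pos hj, dif_pos hj, EReal.coe_ne_bot, if_false,
        EReal.toReal_coe, Real.exp_add, Real.exp_log hcpos]
      ring
    · simp [hh, embA, eexp, dif_neg hj]
  -- integrability of exp ∘ Uk
  have hexpint : ∀ k (j : {j // j ∈ sig A k}),
      Integrable (fun ω => Real.exp (Uk k ω j)) P := by
    intro k j
    by_contra hc
    exact one_ne_zero ((hUknorm k j).symm.trans (integral_undef hc))
  -- transfer lemma
  have key : ∀ g : (Fin d → EReal) → ℝ, Measurable g →
      (∀ k, Integrable (fun ω => g (h k ω)) P) →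
      ∫ ω', g (U ω') ∂P' = ∑ k, m k * ∫ ω, g (h k ω) ∂P := by
    intro g hg hint
    have hmap : ∀ k, Integrable g (Measure.map (h k) P) := fun k =>
      (integrable_map_measure hg.aestronglyMeasurable (hhmeas k).aemeasurable).mpr (hint k)
    rw [← integral_map hUmeas.aemeasurable hg.aestronglyMeasurable, hUlaw,
      integral_finset_sum_measure (fun k _ => ((hmap k).smul_measure ENNReal.ofReal_ne_top))]
    refine Finset.sum_congr rfl fun k _ => ?_
    rw [integral_smul_measure, ENNReal.toReal_ofReal (hmpos k).le, smul_eq_mul,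
      integral_map (hhmeas k).aemeasurable hg.aestronglyMeasurable]
  constructor
  · -- first claim
    intro j
    have hgm : Measurable (fun x : Fin d → EReal => eexp (x j)) :=
      measurable_eexp.comp (measurable_pi_apply j)
    have hintg : ∀ k, Integrable (fun ω => eexp (h k ω j)) P := by
      intro k
      by_cases hj : j ∈ sig A k
      · simp only [heval, dif_pos hj]
        exact (hexpint k ⟨j, hj⟩).const_mul _
      · simp only [heval, dif_neg hj]
        exact integrable_const 0
    rw [key (fun x => eexp (x j)) hgm hintg, ← hA.row_sum j]
    refine Finset.sum_congr rfl fun k _ => ?_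
    by_cases hj : j ∈ sig A k
    · simp only [heval, dif_pos hj]
      rw [integral_const_mul, hUknorm k ⟨j, hj⟩, mul_one, mul_comm,
        div_mul_cancel₀ _ (hmpos k).ne']
    · simp only [heval, dif_neg hj]
      have hA0 : A j k = 0 := by
        have : ¬ (0 < A j k) := fun hp => hj (by simp [sig, hp])
        exact le_antisymm (not_lt.mp this) (hA.mem_Icc j k).1
      simp [hA0]
  · -- second claim
    intro y hy
    set g : (Fin d → EReal) → ℝ := fun x => ⨆ j, y j * eexp (x j) with hgdef
    have hgmeas : Measurable g := by
      have he : g = Finset.univ.sup' Finset.univ_nonempty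
          (fun j (x : Fin d → EReal) => y j * eexp (x j)) := by
        funext x
        simp only [Finset.sup'_apply]
        exact (Finset.sup'_univ_eq_ciSup _).symm
      rw [he]
      exact Finset.measurable_sup' _ fun j _ =>
        measurable_const.mul (measurable_eexp.comp (measurable_pi_apply j))
    -- pointwise formula for g ∘ h
    have hgh : ∀ k ω, g (h k ω) = ⨆ j : Fin d,
        (if hj : j ∈ sig A k then (A j k * y j / m k) * Real.exp (Uk k ω ⟨j, hj⟩)
         else 0) := by
      intro k ω
      refine iSup_congr fun j => ?_
      rw [heval]
      by_cases hj : j ∈ sig A k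
      · rw [dif_pos hj, dif_pos hj]; ring
      · rw [dif_neg hj, dif_neg hj, mul_zero]
    have hterm_nn : ∀ k ω (j : Fin d), 0 ≤
        (if hj : j ∈ sig A k then (A j k * y j / m k) * Real.exp (Uk k ω ⟨j, hj⟩)
         else 0) := by
      intro k ω j
      split
      · exact mul_nonneg (div_nonneg (mul_nonneg (hA.mem_Icc j k).1 (hy j)) (hmpos k).le)
          (Real.exp_pos _).le
      · exact le_rfl
    have hghnn : ∀ k ω, 0 ≤ g (h k ω) := by
      intro k ω
      rw [hgh]
      exact le_ciSup_of_le (Set.Finite.bddAbove (Set.finite_range _)) hnd.some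
        (hterm_nn k ω hnd.some)
    -- integrability of g ∘ h
    have hghint : ∀ k, Integrable (fun ω => g (h k ω)) P := by
      intro k
      have hB : Integrable (fun ω => ∑ j : {j // j ∈ sig A k},
          (A j.1 k * y j.1 / m k) * Real.exp (Uk k ω j)) P :=
        integrable_finset_sum _ fun j _ => (hexpint k j).const_mul _
      refine hB.mono' ((hgmeas.comp (hhmeas k)).aestronglyMeasurable)
        (Filter.Eventually.of_forall fun ω => ?_)
      rw [Real.norm_eq_abs, abs_of_nonneg (hghnn k ω), hgh]
      apply ciSup_le
      intro j
      by_cases hj : j ∈ sig A k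
      · rw [dif_pos hj]
        exact Finset.single_le_sum (f := fun j : {j // j ∈ sig A k} =>
            (A j.1 k * y j.1 / m k) * Real.exp (Uk k ω j))
          (fun i _ => mul_nonneg (div_nonneg (mul_nonneg (hA.mem_Icc _ _).1 (hy _))
            (hmpos k).le) (Real.exp_pos _).le) (Finset.mem_univ ⟨j, hj⟩)
      · rw [dif_neg hj]
        exact Finset.sum_nonneg fun i _ => mul_nonneg (div_nonneg
          (mul_nonneg (hA.mem_Icc _ _).1 (hy _)) (hmpos k).le) (Real.exp_pos _).le
    -- conclude
    rw [key g hgmeas hghint]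
    refine Finset.sum_congr rfl fun k _ => ?_
    have hpoint : ∀ ω, m k * g (h k ω) =
        ⨆ j : {j // j ∈ sig A k}, (A j.1 k * y j.1) * Real.exp (Uk k ω j) := by
      intro ω
      rw [hgh, Real.mul_iSup_of_nonneg (hmpos k).le]
      have hcong : ∀ j : Fin d, m k *
          (if hj : j ∈ sig A k then (A j k * y j / m k) * Real.exp (Uk k ω ⟨j, hj⟩)
           else 0) =
          (if hj : j ∈ sig A k then (A j k * y j) * Real.exp (Uk k ω ⟨j, hj⟩) else 0) := by
        intro j
        split
        · rw [← mul_assoc, mul_comm (m k), div_mul_eq_mul_div,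
            mul_div_assoc, div_self (hmpos k).ne', mul_one]
        · exact mul_zero _
      rw [iSup_congr hcong]
      exact ciSup_dite_eq (signe k)
        (fun j => (A j.1 k * y j.1) * Real.exp (Uk k ω j))
        (fun j => mul_nonneg (mul_nonneg (hA.mem_Icc _ _).1 (hy _)) (Real.exp_pos _).le)
    rw [← integral_const_mul]
    simp only [hpoint]
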